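/- Any two multidegrees of the same total degree on a tree are linearly equivalent; i.e., if Γ is a finite tree and D₁, D₂ are integer-valued functions on the vertices of Γ with the same total sum, then D₂ − D₁ is an integer linear combination of the functions mtd(𝒪_v), where mtd(𝒪_v) takes value −val(v) at v, value 1 at each vertex adjacent to v, and 0 elsewhere. -/

import Mathlib

open Finset SimpleGraph

namespace TreeDivAux

variable {V : Type*} [Fintype V] [DecidableEq V] (G : SimpleGraph V) [DecidableRel G.Adj]

def mtd (v w : V) : ℤ :=
  if w = v then -(G.degree v : ℤ) else if G.Adj v w then 1 else 0

def P (f : V → ℤ) : Prop := ∃ c : V → ℤ, ∀ w, f w = ∑ v, c v * mtd G v w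

lemma P_zero : P G fun _ => (0 : ℤ) := ⟨fun _ => 0, by simp⟩

lemma P_smul {f : V → ℤ} (a : ℤ) (hf : P G f) : P G fun w => a * f w := by
  obtain ⟨c, hc⟩ := hf
  exact ⟨fun v => a * c v, fun w => by simp only [hc w, Finset.mul_sum, mul_assoc]⟩

lemma P_add {f g : V → ℤ} (hf : P G f) (hg : P G g) : P G fun w => f w + g w := by
  obtain ⟨c, hc⟩ := hf; obtain ⟨d, hd⟩ := hg
  exact ⟨fun v => c v + d v, fun w => by
    simp only [hc w, hd w, add_mul, Finset.sum_add_distrib]⟩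

lemma P_sum {ι : Type*} [DecidableEq ι] (s : Finset ι) (f : ι → V → ℤ)
    (hf : ∀ i ∈ s, P G (f i)) :
    P G fun w => ∑ i ∈ s, f i w := by
  induction s using Finset.induction with
  | empty => simpa using P_zero G
  | @insert a s ha ih =>
    simp only [Finset.sum_insert ha]
    exact P_add G (hf a (Finset.mem_insert_self a s))
      (ih fun i hi => hf i (Finset.mem_insert_of_mem hi))

lemma P_edge (hA : G.IsAcyclic) {u v : V} (huv : G.Adj u v) :
    P G fun w => (if w = v then 1 else 0) - (if w = u then 1 else 0) := by
  classical
  have hb : ¬(G \ fromEdgeSet {s(u, v)}).Reachable u v :=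
    ((isBridge_iff.mp ((isAcyclic_iff_forall_adj_isBridge.mp hA) huv)))
  set G' := G \ fromEdgeSet {s(u, v)} with hG'
  set c : V → ℤ := fun x => if G'.Reachable u x then 1 else 0 with hc
  refine ⟨c, fun w => ?_⟩
  have huvne : u ≠ v := huv.ne
  have key : ∀ x, G.Adj w x → c x - c w =
      (if w = u ∧ x = v then -1 else if w = v ∧ x = u then 1 else 0) := by
    intro x hx
    by_cases he : s(w, x) = s(u, v)
    · rw [Sym2.eq_iff] at he
      rcases he with ⟨h1, h2⟩ | ⟨h1, h2⟩
      · simp [hc, h1, h2, hb, Reachable.refl]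
      · simp [hc, h1, h2, hb, Reachable.refl, huvne]
    · have hadj : G'.Adj w x := by
        rw [hG']
        simp only [SimpleGraph.sdiff_adj, SimpleGraph.fromEdgeSet_adj]
        exact ⟨hx, fun h => he h.1⟩
      have hsame : G'.Reachable u x ↔ G'.Reachable u w :=
        ⟨fun h => h.trans hadj.symm.reachable, fun h => h.trans hadj.reachable⟩
      have h0 : c x - c w = 0 := by
        by_cases hr : G'.Reachable u w
        · simp [hc, hr, hsame.mpr hr]
        · have hrx : ¬G'.Reachable u x := fun h => hr (hsame.mp h)
          simp [hc, hr, hrx]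
      rw [h0]
      have hne1 : ¬(w = u ∧ x = v) := fun ⟨h1, h2⟩ => he (by rw [h1, h2])
      have hne2 : ¬(w = v ∧ x = u) := fun ⟨h1, h2⟩ => he (by rw [h1, h2, Sym2.eq_swap])
      simp [hne1, hne2]
  have step1 : ∑ x ∈ G.neighborFinset w, (c x - c w) =
      ∑ x ∈ G.neighborFinset w, (if w = u ∧ x = v then -1 else
        if w = v ∧ x = u then (1:ℤ) else 0) :=
    Finset.sum_congr rfl fun x hx => key x ((G.mem_neighborFinset w x).mp hx)
  have step2 : ∑ x ∈ G.neighborFinset w, (if w = u ∧ x = v then -1 else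
        if w = v ∧ x = u then (1:ℤ) else 0) =
      (if w = v then 1 else 0) - (if w = u then 1 else 0) := by
    by_cases hwu : w = u
    · have hwv : w ≠ v := by rw [hwu]; exact huvne
      have hcong : ∀ x ∈ G.neighborFinset w, (if w = u ∧ x = v then -1 else
          if w = v ∧ x = u then (1:ℤ) else 0) = if x = v then -1 else 0 := by
        intro x _; simp [hwu, hwv, huvne, Ne.symm huvne]
      rw [Finset.sum_congr rfl hcong,
        Finset.sum_ite_eq' (G.neighborFinset w) v fun _ => (-1 : ℤ)]
      simp [SimpleGraph.mem_neighborFinset, hwu, huv, hwv, huvne, Ne.symm huvne]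
    · by_cases hwv : w = v
      · have hcong : ∀ x ∈ G.neighborFinset w, (if w = u ∧ x = v then -1 else
            if w = v ∧ x = u then (1:ℤ) else 0) = if x = u then 1 else 0 := by
          intro x _; simp [hwu, hwv, huvne, Ne.symm huvne]
        rw [Finset.sum_congr rfl hcong,
          Finset.sum_ite_eq' (G.neighborFinset w) u fun _ => (1 : ℤ)]
        simp [SimpleGraph.mem_neighborFinset, hwv, huv.symm, hwu, huvne, Ne.symm huvne]
      · have hcong : ∀ x ∈ G.neighborFinset w, (if w = u ∧ x = v then -1 else
            if w = v ∧ x = u then (1:ℤ) else 0) = 0 := by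
          intro x _; simp [hwu, hwv, huvne, Ne.symm huvne]
        rw [Finset.sum_congr rfl hcong]
        simp [hwu, hwv]
  have step3 : ∑ x, c x * mtd G x w = ∑ x ∈ G.neighborFinset w, (c x - c w) := by
    have hterm : ∀ x, c x * mtd G x w =
        (if w = x then c x * -(G.degree x : ℤ) else 0) +
        (if G.Adj w x then c x else 0) := by
      intro x
      by_cases h1 : w = x
      · subst h1
        simp [mtd, G.irrefl]
      · have h2 : G.Adj x w ↔ G.Adj w x := G.adj_comm x w
        by_cases h3 : G.Adj w x
        · simp [mtd, h1, h2.mpr h3, h3]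
        · have h4 : ¬G.Adj x w := fun h => h3 (h2.mp h)
          simp [mtd, h1, h4, h3]
    have e1 : ∑ x, (if G.Adj w x then c x else 0) = ∑ x ∈ G.neighborFinset w, c x := by
      rw [SimpleGraph.neighborFinset_eq_filter, Finset.sum_filter]
    have e2 : ∑ x ∈ G.neighborFinset w, (c x - c w) =
        ∑ x ∈ G.neighborFinset w, c x - (G.degree w : ℤ) * c w := by
      rw [Finset.sum_sub_distrib, Finset.sum_const, G.card_neighborFinset_eq_degree,
        nsmul_eq_mul]
    rw [Finset.sum_congr rfl fun x _ => hterm x, Finset.sum_add_distrib,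
      Finset.sum_ite_eq _ w fun x => c x * -(G.degree x : ℤ), e1, e2]
    simp only [Finset.mem_univ, if_true]
    ring
  rw [step3, step1, step2]

lemma P_delta (hA : G.IsAcyclic) {u w : V} (h : G.Reachable u w) :
    P G fun y => (if y = w then 1 else 0) - (if y = u then 1 else 0) := by
  obtain ⟨p⟩ := h
  induction p with
  | nil => simpa using P_zero G
  | @cons a b c hab p ih =>
    have h2 := P_edge G hA hab
    have h3 := P_add G ih h2
    simpa [sub_add_sub_cancel] using h3

end TreeDivAux

/-- Any two multidegrees of the same total degree on a finite tree are
linearly equivalent: their difference is an integer linear combination of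
the principal divisors `mtd(𝒪_v)`, where `mtd(𝒪_v)` takes value `-deg v`
at `v`, value `1` at each vertex adjacent to `v`, and `0` elsewhere. -/
theorem tree_divisors_equivalent {V : Type*} [Fintype V] [DecidableEq V]
    (G : SimpleGraph V) [DecidableRel G.Adj] (hT : G.IsTree)
    (D₁ D₂ : V → ℤ) (h : ∑ v, D₁ v = ∑ v, D₂ v) :
    ∃ c : V → ℤ, ∀ w : V,
      D₂ w - D₁ w =
        ∑ v, c v * (if w = v then -(G.degree v : ℤ)
          else if G.Adj v w then 1 else 0) := by
  classical
  obtain ⟨v₀⟩ := hT.isConnected.nonempty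
  set a : V → ℤ := fun w => D₂ w - D₁ w with ha
  have hsum : ∑ x, a x = 0 := by simp [ha, Finset.sum_sub_distrib, h]
  have hfun : ∀ w, a w = ∑ x, a x *
      ((if w = x then 1 else 0) - (if w = v₀ then 1 else 0)) := by
    intro w
    simp only [mul_sub, Finset.sum_sub_distrib, mul_ite, mul_one, mul_zero]
    rw [Finset.sum_ite_eq _ w a]
    by_cases hw : w = v₀ <;> simp [hw, hsum]
  have hP : TreeDivAux.P G fun w => ∑ x, a x *
      ((if w = x then 1 else 0) - (if w = v₀ then 1 else 0)) := by
    apply TreeDivAux.P_sum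
    intro x _
    exact TreeDivAux.P_smul G (a x)
      (TreeDivAux.P_delta G hT.IsAcyclic (hT.isConnected.preconnected v₀ x))
  obtain ⟨c, hc⟩ := hP
  refine ⟨c, fun w => ?_⟩
  have := (hfun w).trans (hc w)
  simpa [TreeDivAux.mtd, ha] using this
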